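/- Let ν : ℕ → ℤ be defined by ν(n) = Σ_{r | n} μ(n/r)·2^r and define M(n) = ν(n) − ν(n)/n − Σ_{n = r·p, p < n} ν(p)·φ(r) (note n | ν(n) so ν(n)/n is an integer). Then lim_{n → ∞} M(n)/2ⁿ = 1. -/
import Mathlib


open ArithmeticFunction in
/-- number of periodic points of minimal period `n` for a generic quadratic polynomial -/
noncomputable def nuPer (n : ℕ) : ℤ := ∑ r ∈ n.divisors, moebius (n / r) * 2 ^ r

/-- degree in `c` of the polynomial `Sₙ(c,s)` counting critical points of period `n`
multipliers; `nuPer n / n` is integer division, which is exact since `n ∣ nuPer n`. -/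
noncomputable def degSn (n : ℕ) : ℤ :=
  nuPer n - nuPer n / (n : ℤ) - ∑ p ∈ n.divisors.filter (· < n), nuPer p * Nat.totient (n / p)

open ArithmeticFunction

lemma card_divisors_le' (n : ℕ) : n.divisors.card ≤ n := by
  have h : n.divisors ⊆ Finset.Ico 1 (n + 1) := Finset.filter_subset _ _
  calc n.divisors.card ≤ (Finset.Ico 1 (n + 1)).card := Finset.card_le_card h
    _ = n := by simp

lemma dvd_lt_le_half {r n : ℕ} (hd : r ∣ n) (hne : r ≠ n) (hn : 1 ≤ n) : r ≤ n / 2 := by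
  obtain ⟨k, hk⟩ := hd
  have hk0 : k ≠ 0 := by rintro rfl; omega
  have hk1 : k ≠ 1 := by rintro rfl; omega
  have : r * 2 ≤ n := by
    calc r * 2 ≤ r * k := Nat.mul_le_mul_left r (by omega)
      _ = n := hk.symm
  omega

lemma abs_term_le (n r m : ℕ) (hrm : r ≤ m) :
    |(moebius (n / r) : ℤ) * 2 ^ r| ≤ 2 ^ m := by
  rw [abs_mul, abs_pow]
  calc |(moebius (n / r) : ℤ)| * |(2:ℤ)| ^ r ≤ 1 * 2 ^ m := by
        apply mul_le_mul abs_moebius_le_one ?_ (by positivity) zero_le_one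
        simpa using pow_le_pow_right₀ (by norm_num : (1:ℤ) ≤ 2) hrm
    _ = 2 ^ m := one_mul _

lemma abs_nuPer_sub (n : ℕ) (hn : 1 ≤ n) :
    |nuPer n - 2 ^ n| ≤ (n : ℤ) * 2 ^ (n / 2) := by
  have hmem : n ∈ n.divisors := Nat.mem_divisors_self n (by omega)
  have hsplit : nuPer n = (moebius (n / n) : ℤ) * 2 ^ n +
      ∑ r ∈ n.divisors.erase n, (moebius (n / r) : ℤ) * 2 ^ r :=
    (Finset.add_sum_erase _ _ hmem).symm
  rw [hsplit, Nat.div_self hn]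
  simp only [moebius_apply_one, one_mul, add_sub_cancel_left]
  calc |∑ r ∈ n.divisors.erase n, (moebius (n / r) : ℤ) * 2 ^ r|
      ≤ ∑ r ∈ n.divisors.erase n, |(moebius (n / r) : ℤ) * 2 ^ r| :=
        Finset.abs_sum_le_sum_abs _ _
    _ ≤ ∑ _r ∈ n.divisors.erase n, (2:ℤ) ^ (n / 2) := by
        apply Finset.sum_le_sum
        intro r hr
        have hrd : r ∣ n := (Nat.mem_divisors.mp (Finset.mem_of_mem_erase hr)).1
        exact abs_term_le n r _ (dvd_lt_le_half hrd (Finset.ne_of_mem_erase hr) hn)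
    _ = ((n.divisors.erase n).card : ℤ) * 2 ^ (n / 2) := by
        rw [Finset.sum_const, nsmul_eq_mul]
    _ ≤ (n : ℤ) * 2 ^ (n / 2) := by
        have h1 : (n.divisors.erase n).card ≤ n :=
          le_trans (Finset.card_erase_le) (card_divisors_le' n)
        have := (Int.ofNat_le.mpr h1)
        exact mul_le_mul_of_nonneg_right (by exact_mod_cast this) (by positivity)

lemma abs_nuPer_le (p : ℕ) : |nuPer p| ≤ (p : ℤ) * 2 ^ p := by
  rcases Nat.eq_zero_or_pos p with h | h
  · subst h; simp [nuPer]
  calc |nuPer p| ≤ ∑ r ∈ p.divisors, |(moebius (p / r) : ℤ) * 2 ^ r| :=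
        Finset.abs_sum_le_sum_abs _ _
    _ ≤ ∑ _r ∈ p.divisors, (2:ℤ) ^ p := by
        apply Finset.sum_le_sum
        intro r hr
        exact abs_term_le p r p (Nat.divisor_le hr)
    _ = (p.divisors.card : ℤ) * 2 ^ p := by rw [Finset.sum_const, nsmul_eq_mul]
    _ ≤ (p : ℤ) * 2 ^ p := by
        exact mul_le_mul_of_nonneg_right (by exact_mod_cast card_divisors_le' p) (by positivity)

lemma abs_sumC_le (n : ℕ) (hn : 1 ≤ n) :
    |∑ p ∈ n.divisors.filter (· < n), nuPer p * (Nat.totient (n / p) : ℤ)|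
      ≤ (n : ℤ) ^ 3 * 2 ^ (n / 2) := by
  calc |∑ p ∈ n.divisors.filter (· < n), nuPer p * (Nat.totient (n / p) : ℤ)|
      ≤ ∑ p ∈ n.divisors.filter (· < n), |nuPer p * (Nat.totient (n / p) : ℤ)| :=
        Finset.abs_sum_le_sum_abs _ _
    _ ≤ ∑ _p ∈ n.divisors.filter (· < n), (n : ℤ) ^ 2 * 2 ^ (n / 2) := by
        apply Finset.sum_le_sum
        intro p hp
        rw [Finset.mem_filter] at hp
        have hpd : p ∣ n := (Nat.mem_divisors.mp hp.1).1
        have hplt : p < n := hp.2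
        have hple : p ≤ n / 2 := dvd_lt_le_half hpd (Nat.lt_iff_le_and_ne.mp hplt).2 hn
        have h1 : |nuPer p| ≤ (n : ℤ) * 2 ^ (n / 2) := by
          calc |nuPer p| ≤ (p : ℤ) * 2 ^ p := abs_nuPer_le p
            _ ≤ (n : ℤ) * 2 ^ (n / 2) := by
                apply mul_le_mul (by exact_mod_cast hplt.le) ?_ (by positivity) (by positivity)
                exact pow_le_pow_right₀ (by norm_num : (1:ℤ) ≤ 2) hple
        have h2 : |(Nat.totient (n / p) : ℤ)| ≤ (n : ℤ) := by
          rw [abs_of_nonneg (by positivity)]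
          exact_mod_cast le_trans (Nat.totient_le _) (Nat.div_le_self n p)
        calc |nuPer p * (Nat.totient (n / p) : ℤ)|
            = |nuPer p| * |(Nat.totient (n / p) : ℤ)| := abs_mul _ _
          _ ≤ ((n : ℤ) * 2 ^ (n / 2)) * n := mul_le_mul h1 h2 (abs_nonneg _) (by positivity)
          _ = (n : ℤ) ^ 2 * 2 ^ (n / 2) := by ring
    _ = ((n.divisors.filter (· < n)).card : ℤ) * ((n : ℤ) ^ 2 * 2 ^ (n / 2)) := by
        rw [Finset.sum_const, nsmul_eq_mul]
    _ ≤ (n : ℤ) * ((n : ℤ) ^ 2 * 2 ^ (n / 2)) := by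
        apply mul_le_mul_of_nonneg_right ?_ (by positivity)
        exact_mod_cast le_trans (Finset.card_filter_le _ _) (card_divisors_le' n)
    _ = (n : ℤ) ^ 3 * 2 ^ (n / 2) := by ring

lemma abs_ediv_real (a : ℤ) (n : ℕ) (hn : 1 ≤ n) :
    |((a / (n : ℤ) : ℤ) : ℝ)| ≤ |(a : ℝ)| / n + 1 := by
  have h0 : (0:ℤ) < (n:ℤ) := by exact_mod_cast hn
  have h1 := Int.mul_ediv_add_emod a (n : ℤ)
  have h2 := Int.emod_nonneg a h0.ne'
  have h3 := Int.emod_lt_of_pos a h0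
  have hn0 : (0:ℝ) < (n:ℝ) := by exact_mod_cast hn
  have hq : ((a / (n:ℤ) : ℤ) : ℝ) = ((a : ℝ) - ((a % (n:ℤ) : ℤ) : ℝ)) / n := by
    field_simp
    have : ((n:ℤ) * (a / (n:ℤ)) : ℤ) = a - a % (n:ℤ) := by omega
    calc ((a / (n:ℤ) : ℤ) : ℝ) * n = (((n:ℤ) * (a / (n:ℤ)) : ℤ) : ℝ) := by push_cast; ring
      _ = ((a - a % (n:ℤ) : ℤ) : ℝ) := by rw [this]
      _ = (a:ℝ) - ((a % (n:ℤ) : ℤ) : ℝ) := by push_cast; ring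
  rw [hq, abs_div, abs_of_pos hn0, div_add' _ _ _ hn0.ne']
  have habs : |(a : ℝ) - ((a % (n:ℤ) : ℤ) : ℝ)| ≤ |(a : ℝ)| + n := by
    have hr : |((a % (n:ℤ) : ℤ) : ℝ)| ≤ n := by
      rw [abs_of_nonneg (by exact_mod_cast h2)]
      exact_mod_cast h3.le
    calc |(a : ℝ) - ((a % (n:ℤ) : ℤ) : ℝ)| ≤ |(a : ℝ)| + |((a % (n:ℤ) : ℤ) : ℝ)| :=
          abs_sub _ _
      _ ≤ |(a : ℝ)| + n := by linarith
  gcongr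
  linarith

lemma two_pow_half_le (n : ℕ) : (2:ℝ) ^ (n / 2) ≤ (Real.sqrt 2) ^ n := by
  have h2 : ((Real.sqrt 2) ^ n) ^ 2 = 2 ^ n := by
    rw [← pow_mul, mul_comm, pow_mul, Real.sq_sqrt (by norm_num)]
  have h1 : ((2:ℝ) ^ (n / 2)) ^ 2 ≤ ((Real.sqrt 2) ^ n) ^ 2 := by
    rw [h2, ← pow_mul]
    exact pow_le_pow_right₀ (by norm_num) (by omega)
  exact (pow_le_pow_iff_left₀ (by positivity) (by positivity) (by norm_num)).mp h1

lemma one_lt_sqrt_two : (1:ℝ) < Real.sqrt 2 := by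
  rw [show (1:ℝ) = Real.sqrt 1 from Real.sqrt_one.symm]
  exact Real.sqrt_lt_sqrt (by norm_num) (by norm_num)

lemma tendsto_bound :
    Filter.Tendsto (fun n : ℕ => ((n:ℝ)^3 + n + 1) * (Real.sqrt 2 / 2) ^ n + 1 / n + (1/2 : ℝ) ^ n)
      Filter.atTop (nhds 0) := by
  have hs := one_lt_sqrt_two
  have hss : Real.sqrt 2 * Real.sqrt 2 = 2 := Real.mul_self_sqrt (by norm_num)
  have hinv : Real.sqrt 2 / 2 = (Real.sqrt 2)⁻¹ := by
    rw [inv_eq_one_div, div_eq_div_iff (by norm_num) (by positivity)]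
    linarith
  have h1 : Filter.Tendsto (fun n : ℕ => ((n:ℝ)^3 + n + 1) * (Real.sqrt 2 / 2) ^ n)
      Filter.atTop (nhds 0) := by
    have e : ∀ n : ℕ, ((n:ℝ)^3 + n + 1) * (Real.sqrt 2 / 2) ^ n
        = (n:ℝ)^3 / (Real.sqrt 2)^n + (n:ℝ)^1 / (Real.sqrt 2)^n + (n:ℝ)^0 / (Real.sqrt 2)^n := by
      intro n
      rw [hinv, inv_pow]
      field_simp
    simp only [e]
    have := ((tendsto_pow_const_div_const_pow_of_one_lt 3 hs).add
      (tendsto_pow_const_div_const_pow_of_one_lt 1 hs)).add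
      (tendsto_pow_const_div_const_pow_of_one_lt 0 hs)
    simpa using this
  have h2 : Filter.Tendsto (fun n : ℕ => 1 / (n:ℝ)) Filter.atTop (nhds 0) :=
    tendsto_one_div_atTop_nhds_zero_nat
  have h3 : Filter.Tendsto (fun n : ℕ => (1/2 : ℝ) ^ n) Filter.atTop (nhds 0) :=
    tendsto_pow_atTop_nhds_zero_of_lt_one (by norm_num) (by norm_num)
  simpa using (h1.add h2).add h3

theorem degSn_div_two_pow_tendsto_one :
    Filter.Tendsto (fun n : ℕ => (degSn n : ℝ) / 2 ^ n) Filter.atTop (nhds 1) := by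
  rw [tendsto_iff_norm_sub_tendsto_zero]
  apply squeeze_zero' (Filter.Eventually.of_forall fun n => norm_nonneg _) ?_ tendsto_bound
  filter_upwards [Filter.eventually_ge_atTop 1] with n hn
  simp only [degSn, Int.cast_sub, Real.norm_eq_abs]
  set a : ℝ := ((nuPer n : ℤ) : ℝ) with ha_def
  set b : ℝ := ((nuPer n / (n : ℤ) : ℤ) : ℝ) with hb_def
  set c : ℝ := ((∑ p ∈ n.divisors.filter (· < n), nuPer p * (Nat.totient (n / p) : ℤ) : ℤ) : ℝ)
    with hc_def
  set T : ℝ := (2:ℝ) ^ n with hT_def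
  set H : ℝ := (2:ℝ) ^ (n / 2) with hH_def
  have hT : (0:ℝ) < T := by rw [hT_def]; positivity
  have hH : (0:ℝ) < H := by rw [hH_def]; positivity
  have hnR : (1:ℝ) ≤ (n:ℝ) := by exact_mod_cast hn
  have hnR0 : (0:ℝ) < (n:ℝ) := by linarith
  have ha : |a - T| ≤ (n:ℝ) * H := by
    rw [ha_def, hT_def, hH_def]
    exact_mod_cast abs_nuPer_sub n hn
  have hc : |c| ≤ (n:ℝ)^3 * H := by
    rw [hc_def, hH_def]
    exact_mod_cast abs_sumC_le n hn
  have ha2 : |a| ≤ T + (n:ℝ) * H := by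
    calc |a| = |(a - T) + T| := by ring_nf
      _ ≤ |a - T| + |T| := abs_add_le _ _
      _ ≤ (n:ℝ) * H + T := by rw [abs_of_pos hT]; linarith
      _ = T + (n:ℝ) * H := by ring
  have hb : |b| ≤ (T + (n:ℝ) * H) / n + 1 := by
    calc |b| ≤ |a| / n + 1 := by rw [hb_def, ha_def]; exact abs_ediv_real (nuPer n) n hn
      _ ≤ (T + (n:ℝ) * H) / n + 1 := by gcongr
  have key : (a - b - c) / T - 1 = ((a - T) - b - c) / T := by
    field_simp
    ring
  rw [key, abs_div, abs_of_pos hT]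
  have hnum : |(a - T) - b - c| ≤ |a - T| + |b| + |c| := by
    calc |(a - T) - b - c| ≤ |(a - T) - b| + |c| := abs_sub _ _
      _ ≤ |a - T| + |b| + |c| := by have := abs_sub (a - T) b; linarith
  calc |(a - T) - b - c| / T
      ≤ ((n:ℝ) * H + ((T + (n:ℝ) * H) / n + 1) + (n:ℝ)^3 * H) / T := by
        gcongr
        linarith
    _ = ((n:ℝ) + 1 + (n:ℝ)^3) * (H / T) + 1 / (n:ℝ) + 1 / T := by
        field_simp
        ring
    _ ≤ ((n:ℝ)^3 + n + 1) * (Real.sqrt 2 / 2) ^ n + 1 / n + (1/2:ℝ) ^ n := by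
        have hHt : H / T ≤ (Real.sqrt 2 / 2) ^ n := by
          rw [div_pow, hT_def, hH_def]
          gcongr
          exact two_pow_half_le n
        have h1T : 1 / T = (1/2:ℝ) ^ n := by rw [hT_def, div_pow, one_pow]
        have hmul : ((n:ℝ) + 1 + (n:ℝ)^3) * (H / T)
            ≤ ((n:ℝ) + 1 + (n:ℝ)^3) * (Real.sqrt 2 / 2) ^ n :=
          mul_le_mul_of_nonneg_left hHt (by positivity)
        have heq : ((n:ℝ) + 1 + (n:ℝ)^3) * (Real.sqrt 2 / 2) ^ n
            = ((n:ℝ)^3 + n + 1) * (Real.sqrt 2 / 2) ^ n := by ring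
        linarith [hmul, heq.le, h1T.le, h1T.ge]
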